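/- Fix ρ ∈ (0,1], a noise power N > 0, an integer J ≥ 1, and power levels P₁, …, P_J > 0. For s = (s₁, …, s_J) ∈ ℤ₊^J define T(s) = Σ_j s_j·P_j and G(s) = Σ_j s_j·ρ·ln(1 + P_j/((1+ρ)(N + T(s) − P_j))). Then for every sequence of vectors s^(K) ∈ ℤ₊^J with Σ_j s_j^(K) = K, one has lim_{K→∞} G(s^(K)) = ρ/(1+ρ). In particular, the limit is independent of the power levels P₁, …, P_J, of the noise power N, and of the choice of the sequence of schedules; consequently both the minimum and the maximum over schedules of size K of the total available service quantum converge to ρ/(1+ρ) as K → ∞. -/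

import Mathlib

open Filter Real

private lemma log_lower_aux (x : ℝ) (hx : 0 ≤ x) : x / (1 + x) ≤ Real.log (1 + x) := by
  have h1 : (0:ℝ) < 1 + x := by linarith
  have h := Real.log_le_sub_one_of_pos (x := (1+x)⁻¹) (by positivity)
  rw [Real.log_inv] at h
  have e : x / (1+x) = 1 - (1+x)⁻¹ := by field_simp; ring
  rw [e]; linarith

private lemma tendsto_div_add_aux (a : ℝ) (T : ℕ → ℝ) (hT : Tendsto T atTop atTop) :
    Tendsto (fun K => T K / (a + T K)) atTop (nhds 1) := by
  have h1 : Tendsto (fun K => a + T K) atTop atTop := tendsto_atTop_add_const_left _ a hT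
  have h2 : Tendsto (fun K => a / (a + T K)) atTop (nhds 0) :=
    Tendsto.div_atTop tendsto_const_nhds h1
  have h3 : Tendsto (fun K => 1 - a / (a + T K)) atTop (nhds 1) := by
    simpa using tendsto_const_nhds.sub h2
  refine h3.congr' ?_
  filter_upwards [h1.eventually_gt_atTop 0] with K hK
  field_simp; ring

theorem stmt4 (ρ N : ℝ) (hρ : ρ ∈ Set.Ioc (0 : ℝ) 1) (hN : 0 < N)
    (J : ℕ) (hJ : 1 ≤ J) (P : Fin J → ℝ) (hP : ∀ j, 0 < P j)
    (s : ℕ → Fin J → ℕ) (hs : ∀ K, ∑ j, s K j = K) :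
    Filter.Tendsto
      (fun K : ℕ => ∑ j, (s K j : ℝ) * ρ *
        Real.log (1 + P j / ((1 + ρ) * (N + (∑ j', (s K j' : ℝ) * P j') - P j))))
      Filter.atTop (nhds (ρ / (1 + ρ))) := by
  obtain ⟨hρ0, hρ1⟩ := hρ
  have hρp : (0:ℝ) < 1 + ρ := by linarith
  have hJ' : Nonempty (Fin J) := Fin.pos_iff_nonempty.mp hJ
  have hne : (Finset.univ : Finset (Fin J)).Nonempty := Finset.univ_nonempty
  set M := Finset.univ.sup' hne P with hM
  set m := Finset.univ.inf' hne P with hm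
  have hm0 : 0 < m := (Finset.lt_inf'_iff hne).mpr fun j _ => hP j
  have hPM : ∀ j, P j ≤ M := fun j => Finset.le_sup' P (Finset.mem_univ j)
  have hM0 : 0 < M := lt_of_lt_of_le (hP ⟨0, hJ⟩) (hPM _)
  set T : ℕ → ℝ := fun K => ∑ j', (s K j' : ℝ) * P j' with hTdef
  have hTlb : ∀ K : ℕ, (K : ℝ) * m ≤ T K := by
    intro K
    calc (K:ℝ) * m = ∑ j, (s K j : ℝ) * m := by
          rw [← Finset.sum_mul, ← Nat.cast_sum, hs K]
      _ ≤ T K := Finset.sum_le_sum fun j _ =>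
          mul_le_mul_of_nonneg_left (Finset.inf'_le P (Finset.mem_univ j)) (Nat.cast_nonneg _)
  have hTtop : Tendsto T atTop atTop := by
    apply tendsto_atTop_mono hTlb
    exact Tendsto.atTop_mul_const hm0 tendsto_natCast_atTop_atTop
  -- key summation identity
  have key : ∀ (c : ℝ) (K : ℕ), c ≠ 0 →
      ∑ j, (s K j : ℝ) * ρ * (P j / ((1+ρ) * c)) = ρ/(1+ρ) * (T K / c) := by
    intro c K hc
    have e : ∀ j ∈ Finset.univ, (s K j : ℝ) * ρ * (P j / ((1+ρ)*c))
        = (ρ/((1+ρ)*c)) * ((s K j : ℝ) * P j) := fun j _ => by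
      field_simp
    rw [Finset.sum_congr rfl e, ← Finset.mul_sum, hTdef]
    field_simp
  have hlo : Tendsto (fun K => ρ/(1+ρ) * (T K / (N + T K))) atTop (nhds (ρ/(1+ρ))) := by
    simpa using (tendsto_div_add_aux N T hTtop).const_mul (ρ/(1+ρ))
  have hhi : Tendsto (fun K => ρ/(1+ρ) * (T K / ((N - M) + T K))) atTop (nhds (ρ/(1+ρ))) := by
    simpa using (tendsto_div_add_aux (N - M) T hTtop).const_mul (ρ/(1+ρ))
  refine tendsto_of_tendsto_of_tendsto_of_le_of_le' hlo hhi ?_ ?_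
  · -- lower bound eventually
    filter_upwards [hTtop.eventually_gt_atTop M] with K hKM
    have h1 : (0:ℝ) < N + T K := by linarith
    rw [← key (N + T K) K h1.ne']
    refine Finset.sum_le_sum fun j _ => ?_
    have hD : 0 < N + T K - P j := by have := hPM j; linarith
    have hc : 0 < (1+ρ) * (N + T K - P j) := mul_pos hρp hD
    refine mul_le_mul_of_nonneg_left ?_ (by positivity)
    set x := P j / ((1+ρ) * (N + T K - P j)) with hxdef
    have hx : 0 ≤ x := div_nonneg (hP j).le hc.le
    refine le_trans ?_ (log_lower_aux x hx)
    have e : x / (1 + x) = P j / ((1+ρ) * (N + T K - P j) + P j) := by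
      rw [hxdef]; field_simp
    rw [e]
    have hden : 0 < (1+ρ) * (N + T K - P j) + P j := by
      have := hP j; linarith
    have hle : (1+ρ) * (N + T K - P j) + P j ≤ (1+ρ) * (N + T K) := by
      nlinarith [mul_pos hρ0 (hP j)]
    exact div_le_div_of_nonneg_left (hP j).le hden hle
  · -- upper bound eventually
    filter_upwards [hTtop.eventually_gt_atTop M] with K hKM
    have h1 : (0:ℝ) < (N - M) + T K := by linarith
    rw [← key ((N - M) + T K) K h1.ne']
    refine Finset.sum_le_sum fun j _ => ?_
    have hD : 0 < N + T K - P j := by have := hPM j; linarith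
    have hc : 0 < (1+ρ) * (N + T K - P j) := mul_pos hρp hD
    have hc2 : 0 < (1+ρ) * ((N - M) + T K) := mul_pos hρp h1
    refine mul_le_mul_of_nonneg_left ?_ (by positivity)
    have hx : 0 ≤ P j / ((1+ρ) * (N + T K - P j)) := div_nonneg (hP j).le hc.le
    have hlog : Real.log (1 + P j / ((1+ρ) * (N + T K - P j)))
        ≤ P j / ((1+ρ) * (N + T K - P j)) := by
      have := Real.log_le_sub_one_of_pos (x := 1 + P j / ((1+ρ) * (N + T K - P j))) (by linarith)
      linarith
    refine hlog.trans ?_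
    have hle : (1+ρ) * ((N - M) + T K) ≤ (1+ρ) * (N + T K - P j) := by
      have := hPM j; nlinarith
    exact div_le_div_of_nonneg_left (hP j).le hc2 hle
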